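/- Let G be a network with request R and extended graph G_ext. Let x : S → {0,1} and f : E_ext → ℕ satisfy (IP-1) f(δ⁺_{E_ext}(v)) = f(δ⁻_{E_ext}(v)) for all v ∈ V_G, (IP-2) f(δ⁺_{E_R}(W)) ≥ x_s for all W ⊆ V_G and s ∈ W∩S, f(o⁺,s) = x_s for all s ∈ S, f(o⁺,t) = 0 for all t ∈ T, and f(s,o⁻_S) ≥ x_s for all s ∈ S. Then x_s = 0 for every s ∈ S. (That is, if no terminal injects flow, then no Steiner node can be active: active Steiner nodes cannot absorb all super-source flow while satisfying the connectivity inequalities.) -/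

import Mathlib

/-! Formalization of the Constrained Virtual Steiner Arborescence Problem (CVSAP),
its single-commodity flow IP formulation, and related notions. -/

/-- Vertices of the extended graph: original vertices plus super source `src`,
super sink `sinkS` for Steiner nodes and super sink `sinkR` for the root. -/
inductive ExtV (V : Type) where
  | orig : V → ExtV V
  | src : ExtV V
  | sinkS : ExtV V
  | sinkR : ExtV V
deriving DecidableEq

open ExtV

/-- A (finite) capacitated directed network. -/
structure Network (V : Type) [DecidableEq V] where
  E : Finset (V × V)
  uE : V × V → ℕ
  cE : V × V → ℝ

/-- A request `R = (root, S, T, u_r, c_S, u_S)`. -/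
structure Request (V : Type) [DecidableEq V] where
  root : V
  S : Finset V
  T : Finset V
  ur : ℕ
  cS : V → ℝ
  uS : V → ℕ

variable {V : Type} [DecidableEq V]

/-- Well-formedness: root is neither terminal nor Steiner site, Steiner sites and terminals
are disjoint, and all costs are positive. -/
def RequestWF (N : Network V) (R : Request V) : Prop :=
  R.root ∉ R.T ∧ R.root ∉ R.S ∧ Disjoint R.S R.T ∧
    (∀ s ∈ R.S, 0 < R.cS s) ∧ (∀ e ∈ N.E, 0 < N.cE e)

/-- Edge set of the extended graph `G_ext`. -/
def Eext (N : Network V) (R : Request V) : Finset (ExtV V × ExtV V) :=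
  (N.E.image fun e => (orig e.1, orig e.2)) ∪
    ({(orig R.root, sinkR)} : Finset (ExtV V × ExtV V)) ∪
    (R.S.image fun s => (orig s, sinkS)) ∪
    (R.S.image fun s => (src, orig s)) ∪
    (R.T.image fun t => (src, orig t))

/-- `E_R`: the extended edges without the edges into the Steiner super sink. -/
def ERext (N : Network V) (R : Request V) : Finset (ExtV V × ExtV V) :=
  (Eext N R).filter fun e => e.2 ≠ sinkS

/-- Edges of `F` leaving node `v`. -/
def outV (F : Finset (ExtV V × ExtV V)) (v : ExtV V) : Finset (ExtV V × ExtV V) :=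
  F.filter fun e => e.1 = v

/-- Edges of `F` entering node `v`. -/
def inV (F : Finset (ExtV V × ExtV V)) (v : ExtV V) : Finset (ExtV V × ExtV V) :=
  F.filter fun e => e.2 = v

/-- Edges of `F` leaving the node set `W`. -/
def outSet (F : Finset (ExtV V × ExtV V)) (W : Finset (ExtV V)) : Finset (ExtV V × ExtV V) :=
  F.filter fun e => e.1 ∈ W ∧ e.2 ∉ W

/-- Total flow of `f` on the edge set `F`. -/
def fSum (f : ExtV V × ExtV V → ℕ) (F : Finset (ExtV V × ExtV V)) : ℕ :=
  ∑ e ∈ F, f e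

/-- Embedding of a set of original nodes into the extended graph. -/
def extW (W : Finset V) : Finset (ExtV V) := W.image orig

/-- A walk in the support graph `G^f_ext`: consecutive nodes are joined by extended
edges carrying positive flow. -/
def IsSupportWalk (N : Network V) (R : Request V) (f : ExtV V × ExtV V → ℕ)
    (p : List (ExtV V)) : Prop :=
  p.Chain' fun a b => (a, b) ∈ Eext N R ∧ 1 ≤ f (a, b)

/-- (IP-1): flow conservation at all original nodes. -/
def IP1 (N : Network V) (R : Request V) (f : ExtV V × ExtV V → ℕ) : Prop :=
  ∀ v : V, fSum f (outV (Eext N R) (orig v)) = fSum f (inV (Eext N R) (orig v))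

/-- (IP-2): connectivity inequalities for activated Steiner sites. -/
def IP2 (N : Network V) (R : Request V) (x : V → ℕ) (f : ExtV V × ExtV V → ℕ) : Prop :=
  ∀ W : Finset V, ∀ s ∈ W, s ∈ R.S → x s ≤ fSum f (outSet (ERext N R) (extW W))

/-- (IP-3): directed Steiner cuts for terminals. -/
def IP3 (N : Network V) (R : Request V) (f : ExtV V × ExtV V → ℕ) : Prop :=
  ∀ W : Finset V, (W ∩ R.T).Nonempty → 1 ≤ fSum f (outSet (ERext N R) (extW W))

/-- Feasibility for the integer program IP-A-CVSAP. -/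
def IPFeasible (N : Network V) (R : Request V) (x : V → ℕ) (f : ExtV V × ExtV V → ℕ) : Prop :=
  (∀ s ∈ R.S, x s ≤ 1) ∧
  IP1 N R f ∧
  IP2 N R x f ∧
  IP3 N R f ∧
  (∀ s ∈ R.S, x s ≤ f (orig s, sinkS)) ∧
  (∀ s ∈ R.S, f (orig s, sinkS) ≤ R.uS s * x s) ∧
  f (orig R.root, sinkR) ≤ R.ur ∧
  (∀ e ∈ N.E, f (orig e.1, orig e.2) ≤ N.uE e) ∧
  (∀ t ∈ R.T, f (src, orig t) = 1) ∧
  (∀ s ∈ R.S, f (src, orig s) = x s)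

/-- Objective value of IP-A-CVSAP. -/
noncomputable def costIP (N : Network V) (R : Request V) (x : V → ℕ)
    (f : ExtV V × ExtV V → ℕ) : ℝ :=
  ∑ e ∈ N.E, N.cE e * f (orig e.1, orig e.2) + ∑ s ∈ R.S, R.cS s * x s

/-- A Virtual Arborescence: nodes, virtual edges and the mapping of virtual edges
onto paths in the underlying graph. -/
structure VirtArb (V : Type) where
  VT : Finset V
  ET : Finset (V × V)
  pi : V × V → List V

/-- `p` is a simple directed path in `N` from `u` to `v`. -/
def IsPathInG (N : Network V) (p : List V) (u v : V) : Prop :=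
  p.Chain' (fun a b => (a, b) ∈ N.E) ∧ p.head? = some u ∧ p.getLast? = some v ∧ p.Nodup

/-- The virtual edges whose path uses the edge `e` of the underlying graph. -/
def pathUses (TA : VirtArb V) (e : V × V) : Finset (V × V) :=
  TA.ET.filter fun d => e ∈ (TA.pi d).zip (TA.pi d).tail

/-- `|π(E_T)[e]|`: the number of paths of the virtual arborescence using edge `e`. -/
def pathCount (TA : VirtArb V) (e : V × V) : ℕ := (pathUses TA e).card

/-- Total degree of node `v` with respect to the virtual edge set `ET`. -/
def degTotal (ET : Finset (V × V)) (v : V) : ℕ :=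
  (ET.filter fun e => e.1 = v).card + (ET.filter fun e => e.2 = v).card

/-- `(VT, ET, r)` is an arborescence rooted at `r` with all edges oriented towards `r`. -/
def ArborTowards (VT : Finset V) (ET : Finset (V × V)) (r : V) : Prop :=
  (∀ e ∈ ET, e.1 ∈ VT ∧ e.2 ∈ VT ∧ e.1 ≠ e.2) ∧
  (∀ v ∈ VT, v ≠ r → (ET.filter fun e => e.1 = v).card = 1) ∧
  (∀ e ∈ ET, e.1 ≠ r) ∧
  (∀ v ∈ VT, ∃ p : List V, p.Chain' (fun a b => (a, b) ∈ ET) ∧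
      p.head? = some v ∧ p.getLast? = some r)

/-- `(VT, ET, r)` is an arborescence rooted at `r` with all edges oriented away from `r`. -/
def ArborAway (VT : Finset V) (ET : Finset (V × V)) (r : V) : Prop :=
  (∀ e ∈ ET, e.1 ∈ VT ∧ e.2 ∈ VT ∧ e.1 ≠ e.2) ∧
  (∀ v ∈ VT, v ≠ r → (ET.filter fun e => e.2 = v).card = 1) ∧
  (∀ e ∈ ET, e.2 ≠ r) ∧
  (∀ v ∈ VT, ∃ p : List V, p.Chain' (fun a b => (a, b) ∈ ET) ∧
      p.head? = some r ∧ p.getLast? = some v)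

/-- Feasible solutions of A-CVSAP: all arborescence edges oriented towards the root. -/
def FeasibleACVSAP (N : Network V) (R : Request V) (TA : VirtArb V) : Prop :=
  R.root ∈ TA.VT ∧
  ArborTowards TA.VT TA.ET R.root ∧
  (∀ d ∈ TA.ET, IsPathInG N (TA.pi d) d.1 d.2) ∧
  R.T ⊆ TA.VT ∧
  TA.VT ⊆ insert R.root (R.S ∪ R.T) ∧
  (∀ t ∈ R.T, degTotal TA.ET t = 1) ∧
  degTotal TA.ET R.root ≤ R.ur ∧
  (∀ s ∈ R.S, s ∈ TA.VT → degTotal TA.ET s ≤ R.uS s + 1) ∧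
  (∀ e ∈ N.E, pathCount TA e ≤ N.uE e)

/-- Feasible solutions of M-CVSAP: all arborescence edges oriented away from the root. -/
def FeasibleMCVSAP (N : Network V) (R : Request V) (TA : VirtArb V) : Prop :=
  R.root ∈ TA.VT ∧
  ArborAway TA.VT TA.ET R.root ∧
  (∀ d ∈ TA.ET, IsPathInG N (TA.pi d) d.1 d.2) ∧
  R.T ⊆ TA.VT ∧
  TA.VT ⊆ insert R.root (R.S ∪ R.T) ∧
  (∀ t ∈ R.T, degTotal TA.ET t = 1) ∧
  degTotal TA.ET R.root ≤ R.ur ∧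
  (∀ s ∈ R.S, s ∈ TA.VT → degTotal TA.ET s ≤ R.uS s + 1) ∧
  (∀ e ∈ N.E, pathCount TA e ≤ N.uE e)

/-- Cost of a virtual arborescence. -/
noncomputable def costCVSAP (N : Network V) (R : Request V) (TA : VirtArb V) : ℝ :=
  ∑ e ∈ N.E, N.cE e * pathCount TA e + ∑ s ∈ R.S.filter (· ∈ TA.VT), R.cS s


section Aux

open Finset

def IsOrigE : ExtV V → Prop
  | ExtV.orig _ => True
  | _ => False

instance : DecidablePred (IsOrigE (V := V))
  | ExtV.orig _ => isTrue trivial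
  | ExtV.src => isFalse id
  | ExtV.sinkS => isFalse id
  | ExtV.sinkR => isFalse id

lemma sum_out_eq [Fintype V] (N : Network V) (R : Request V) (f : ExtV V × ExtV V → ℕ) :
    ∑ v : V, fSum f (outV (Eext N R) (orig v)) =
      ∑ e ∈ (Eext N R).filter (fun e => IsOrigE e.1), f e := by
  unfold fSum outV
  simp only [Finset.sum_filter]
  rw [Finset.sum_comm]
  refine Finset.sum_congr rfl fun e _ => ?_
  obtain ⟨a, b⟩ := e
  cases a <;> simp [IsOrigE, Finset.sum_ite_eq, eq_comm]

lemma sum_in_eq [Fintype V] (N : Network V) (R : Request V) (f : ExtV V × ExtV V → ℕ) :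
    ∑ v : V, fSum f (inV (Eext N R) (orig v)) =
      ∑ e ∈ (Eext N R).filter (fun e => IsOrigE e.2), f e := by
  unfold fSum inV
  simp only [Finset.sum_filter]
  rw [Finset.sum_comm]
  refine Finset.sum_congr rfl fun e _ => ?_
  obtain ⟨a, b⟩ := e
  cases b <;> simp [IsOrigE, Finset.sum_ite_eq, eq_comm]

lemma mem_Eext_iff {N : Network V} {R : Request V} {a b : ExtV V} :
    (a, b) ∈ Eext N R ↔
      (∃ p ∈ N.E, a = orig p.1 ∧ b = orig p.2) ∨ (a = orig R.root ∧ b = sinkR) ∨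
      (∃ s ∈ R.S, a = orig s ∧ b = sinkS) ∨ (∃ s ∈ R.S, a = src ∧ b = orig s) ∨
      (∃ t ∈ R.T, a = src ∧ b = orig t) := by
  simp [Eext, Prod.ext_iff, eq_comm, and_comm, or_assoc]
  exact or_left_comm

lemma filterA_eq (N : Network V) (R : Request V) :
    (Eext N R).filter (fun e => IsOrigE e.1 ∧ ¬ IsOrigE e.2) =
      insert (orig R.root, sinkR) (R.S.image fun s => (orig s, sinkS)) := by
  ext ⟨a, b⟩
  simp only [Finset.mem_filter, mem_Eext_iff, Finset.mem_insert, Finset.mem_image,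
    Prod.ext_iff]
  cases a <;> cases b <;> simp [IsOrigE]

lemma filterB_eq (N : Network V) (R : Request V) :
    (Eext N R).filter (fun e => IsOrigE e.2 ∧ ¬ IsOrigE e.1) =
      (R.S.image fun s => (src, orig s)) ∪ (R.T.image fun t => (src, orig t)) := by
  ext ⟨a, b⟩
  simp only [Finset.mem_filter, mem_Eext_iff, Finset.mem_union, Finset.mem_image,
    Prod.ext_iff]
  cases a <;> cases b <;> simp [IsOrigE]

lemma outSet_univ (N : Network V) (R : Request V) [Fintype V] :
    outSet (ERext N R) (extW (Finset.univ : Finset V)) = {(orig R.root, sinkR)} := by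
  have hmem : ∀ a : ExtV V, a ∈ extW (Finset.univ : Finset V) ↔ IsOrigE a := by
    intro a; cases a <;> simp [extW, IsOrigE]
  ext ⟨a, b⟩
  simp only [outSet, ERext, Finset.mem_filter, mem_Eext_iff, Finset.mem_singleton,
    hmem, Prod.ext_iff]
  cases a <;> cases b <;> simp [IsOrigE]

end Aux

/-! ### Statement 11: if no terminal injects flow, no Steiner node can be active. -/

theorem no_terminal_flow_no_active_steiner [Fintype V] (N : Network V) (R : Request V)
    (hWF : RequestWF N R) (x : V → ℕ) (f : ExtV V × ExtV V → ℕ)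
    (hf0 : ∀ e ∉ Eext N R, f e = 0)
    (hx01 : ∀ s ∈ R.S, x s ≤ 1)
    (h1 : IP1 N R f) (h2 : IP2 N R x f)
    (h9 : ∀ s ∈ R.S, f (ExtV.src, ExtV.orig s) = x s)
    (hT0 : ∀ t ∈ R.T, f (ExtV.src, ExtV.orig t) = 0)
    (h4 : ∀ s ∈ R.S, x s ≤ f (ExtV.orig s, ExtV.sinkS)) :
    ∀ s ∈ R.S, x s = 0 := by
  have hD : Disjoint R.S R.T := hWF.2.2.1
  -- global flow conservation over all original nodes
  have hcons : ∑ e ∈ (Eext N R).filter (fun e => IsOrigE e.1), f e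
      = ∑ e ∈ (Eext N R).filter (fun e => IsOrigE e.2), f e := by
    rw [← sum_out_eq, ← sum_in_eq]
    exact Finset.sum_congr rfl fun v _ => h1 v
  have hsplit1 := Finset.sum_filter_add_sum_filter_not
      ((Eext N R).filter (fun e => IsOrigE e.1)) (fun e => IsOrigE e.2) f
  have hsplit2 := Finset.sum_filter_add_sum_filter_not
      ((Eext N R).filter (fun e => IsOrigE e.2)) (fun e => IsOrigE e.1) f
  rw [Finset.filter_filter, Finset.filter_filter] at hsplit1 hsplit2
  have hmid : (Eext N R).filter (fun e => IsOrigE e.2 ∧ IsOrigE e.1)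
      = (Eext N R).filter (fun e => IsOrigE e.1 ∧ IsOrigE e.2) := by
    apply Finset.filter_congr; intro e _; rw [and_comm]
  rw [hmid] at hsplit2
  have hAB : ∑ e ∈ (Eext N R).filter (fun e => IsOrigE e.1 ∧ ¬ IsOrigE e.2), f e
      = ∑ e ∈ (Eext N R).filter (fun e => IsOrigE e.2 ∧ ¬ IsOrigE e.1), f e := by
    omega
  rw [filterA_eq, filterB_eq] at hAB
  have hnotmem : ((orig R.root : ExtV V), (sinkR : ExtV V))
      ∉ R.S.image fun s => ((orig s : ExtV V), sinkS) := by simp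
  rw [Finset.sum_insert hnotmem] at hAB
  have hinjS : ∀ a ∈ R.S, ∀ b ∈ R.S,
      ((orig a : ExtV V), (sinkS : ExtV V)) = (orig b, sinkS) → a = b := by
    intro a _ b _ h; simpa using h
  rw [Finset.sum_image hinjS] at hAB
  have hdisj : Disjoint (R.S.image fun s => ((src : ExtV V), orig s))
      (R.T.image fun t => ((src : ExtV V), orig t)) := by
    simp only [Finset.disjoint_left, Finset.mem_image]
    rintro _ ⟨a, ha, rfl⟩ ⟨b, hb, hab⟩
    have : b = a := by simpa using hab
    subst this
    exact Finset.disjoint_left.mp hD ha hb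
  rw [Finset.sum_union hdisj] at hAB
  have hinjS' : ∀ a ∈ R.S, ∀ b ∈ R.S,
      ((src : ExtV V), (orig a : ExtV V)) = (src, orig b) → a = b := by
    intro a _ b _ h; simpa using h
  have hinjT : ∀ a ∈ R.T, ∀ b ∈ R.T,
      ((src : ExtV V), (orig a : ExtV V)) = (src, orig b) → a = b := by
    intro a _ b _ h; simpa using h
  rw [Finset.sum_image hinjS', Finset.sum_image hinjT] at hAB
  rw [Finset.sum_congr rfl fun s hs => h9 s hs,
      Finset.sum_congr rfl fun t ht => hT0 t ht] at hAB
  simp only [Finset.sum_const_zero, add_zero] at hAB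
  have hle : R.S.sum x ≤ ∑ s ∈ R.S, f (orig s, sinkS) := Finset.sum_le_sum (f := x) h4
  have hroot0 : f (orig R.root, sinkR) = 0 := by omega
  -- now use IP-2 with W = univ
  intro s hs
  have hcut := h2 Finset.univ s (Finset.mem_univ s) hs
  rw [outSet_univ] at hcut
  simp [fSum, hroot0] at hcut
  omega
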